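/- Let a, b > 0 be real numbers. Then lim_{k→∞} N_k(a,b)²/(2k) = ab. -/

import Mathlib

open Real Set Filter

noncomputable section

/-- `N_k(a,b)`: the `(k+1)`-st smallest element, counted with repetitions, of the sequence
of nonnegative integer linear combinations `am + bn` (`m, n ∈ ℕ`) written in nondecreasing
order; equivalently, `N_k(a,b) = inf {L ∈ ℝ | #{(m,n) ∈ ℕ×ℕ : am+bn ≤ L} ≥ k+1}`. -/
def Nk (a b : ℝ) (k : ℕ) : ℝ :=
  sInf {L : ℝ | k + 1 ≤ {p : ℕ × ℕ | a * p.1 + b * p.2 ≤ L}.ncard}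

namespace NkAux

variable {a b : ℝ}

lemma mem_iff (ha : 0 < a) (hb : 0 < b) {L : ℝ} (hL : 0 ≤ L) (m n : ℕ) :
    a * m + b * n ≤ L ↔ m < ⌊L / a⌋₊ + 1 ∧ n < ⌊(L - a * m) / b⌋₊ + 1 := by
  constructor
  · intro h
    have hbn : (0:ℝ) ≤ b * n := by positivity
    have ham : a * m ≤ L := by linarith
    have hm : m ≤ ⌊L / a⌋₊ := Nat.le_floor ((le_div_iff₀ ha).2 (by linarith))
    have hn : n ≤ ⌊(L - a * m) / b⌋₊ := Nat.le_floor ((le_div_iff₀ hb).2 (by linarith))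
    exact ⟨Nat.lt_succ_of_le hm, Nat.lt_succ_of_le hn⟩
  · rintro ⟨hm, hn⟩
    have hm' : (m:ℝ) ≤ L / a := le_trans (by exact_mod_cast Nat.cast_le.2 (Nat.lt_succ_iff.1 hm))
      (Nat.floor_le (by positivity))
    have ham : a * m ≤ L := by rw [mul_comm]; exact (le_div_iff₀ ha).1 hm'
    have hn' : (n:ℝ) ≤ (L - a * m) / b := le_trans
      (by exact_mod_cast Nat.cast_le.2 (Nat.lt_succ_iff.1 hn))
      (Nat.floor_le (div_nonneg (by linarith) hb.le))
    have : b * n ≤ L - a * m := by rw [mul_comm]; exact (le_div_iff₀ hb).1 hn'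
    linarith

lemma ncard_eq (ha : 0 < a) (hb : 0 < b) {L : ℝ} (hL : 0 ≤ L) :
    {p : ℕ × ℕ | a * p.1 + b * p.2 ≤ L}.ncard
      = ∑ m ∈ Finset.range (⌊L / a⌋₊ + 1), (⌊(L - a * m) / b⌋₊ + 1) := by
  have hset : {p : ℕ × ℕ | a * p.1 + b * p.2 ≤ L} =
      ↑((Finset.range (⌊L / a⌋₊ + 1)).biUnion
        (fun m => (Finset.range (⌊(L - a * m) / b⌋₊ + 1)).image (fun n => (m, n)))) := by
    ext ⟨m, n⟩
    simp only [Set.mem_setOf_eq, Finset.coe_biUnion, Set.mem_iUnion, Finset.mem_coe,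
      Finset.mem_range, Finset.mem_image, mem_iff ha hb hL]
    constructor
    · rintro ⟨h1, h2⟩; exact ⟨m, h1, n, h2, rfl⟩
    · rintro ⟨m', h1, n', h2, h3⟩
      obtain ⟨rfl, rfl⟩ : m' = m ∧ n' = n := by simpa [Prod.ext_iff] using h3
      exact ⟨h1, h2⟩
  rw [hset, Set.ncard_coe_finset, Finset.card_biUnion]
  · refine Finset.sum_congr rfl fun m _ => ?_
    rw [Finset.card_image_of_injective _ (fun x y hxy => by simpa using hxy), Finset.card_range]
  · intro x _ y _ hxy
    simp only [Finset.disjoint_left, Finset.mem_image]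
    rintro ⟨p, q⟩ ⟨n1, _, h1⟩ ⟨n2, _, h2⟩
    apply hxy
    have e1 : x = p := (Prod.ext_iff.1 h1).1
    have e2 : y = p := (Prod.ext_iff.1 h2).1
    rw [e1, e2]

end NkAux

namespace NkAux2
variable {a b : ℝ}

lemma gauss (M : ℕ) : (∑ m ∈ Finset.range (M + 1), (m:ℝ)) = M * (M + 1) / 2 := by
  have h := Finset.sum_range_id_mul_two (M + 1)
  have h2 : ((∑ m ∈ Finset.range (M + 1), m : ℕ) : ℝ) * 2 = ((M + 1) * (M + 1 - 1) : ℕ) := by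
    exact_mod_cast congrArg (Nat.cast (R := ℝ)) h
  push_cast [Nat.add_sub_cancel] at h2
  linarith

lemma sum_linear (M : ℕ) (L : ℝ) (hb : 0 < b) :
    (∑ m ∈ Finset.range (M + 1), (L - a * m) / b)
      = ((M + 1) * L - a * (M * (M + 1) / 2)) / b := by
  rw [← Finset.sum_div]
  congr 1
  rw [Finset.sum_sub_distrib, Finset.sum_const, Finset.card_range, ← Finset.mul_sum, gauss]
  push_cast; ring

lemma sum_lower (ha : 0 < a) (hb : 0 < b) {L : ℝ} (hL : 0 ≤ L) :
    L ^ 2 / (2 * a * b) ≤ ∑ m ∈ Finset.range (⌊L / a⌋₊ + 1), ((⌊(L - a * m) / b⌋₊ : ℝ) + 1) := by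
  set M := ⌊L / a⌋₊ with hM
  have hM1 : (M : ℝ) ≤ L / a := Nat.floor_le (by positivity)
  have hM2 : L / a < M + 1 := Nat.lt_floor_add_one _
  have hx : a * M ≤ L := by rw [mul_comm]; exact (le_div_iff₀ ha).1 hM1
  have hx2 : L < a * M + a := by
    have := (div_lt_iff₀ ha).1 hM2; nlinarith
  have step1 : (∑ m ∈ Finset.range (M + 1), (L - a * m) / b)
      ≤ ∑ m ∈ Finset.range (M + 1), ((⌊(L - a * m) / b⌋₊ : ℝ) + 1) :=
    Finset.sum_le_sum fun m _ => (Nat.lt_floor_add_one _).le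
  rw [sum_linear M L hb] at step1
  refine le_trans ?_ step1
  rw [div_le_div_iff₀ (by positivity) hb]
  nlinarith [mul_nonneg (sub_nonneg.2 hx) (by linarith : (0:ℝ) ≤ a - (L - a * M)),
    mul_nonneg ha.le hL, sq_nonneg (L - a * M), mul_pos ha hb, hb.le,
    mul_nonneg (mul_nonneg (sub_nonneg.2 hx) (by linarith : (0:ℝ) ≤ a - (L - a * M))) hb.le,
    mul_nonneg (mul_nonneg ha.le hL) hb.le]

lemma sum_upper (ha : 0 < a) (hb : 0 < b) {L : ℝ} (hL : 0 ≤ L) :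
    (∑ m ∈ Finset.range (⌊L / a⌋₊ + 1), ((⌊(L - a * m) / b⌋₊ : ℝ) + 1))
      ≤ (L + a + b) ^ 2 / (2 * a * b) := by
  set M := ⌊L / a⌋₊ with hM
  have hM1 : (M : ℝ) ≤ L / a := Nat.floor_le (by positivity)
  have hM2 : L / a < M + 1 := Nat.lt_floor_add_one _
  have hx : a * M ≤ L := by rw [mul_comm]; exact (le_div_iff₀ ha).1 hM1
  have hx2 : L < a * M + a := by
    have := (div_lt_iff₀ ha).1 hM2; nlinarith
  have step1 : (∑ m ∈ Finset.range (M + 1), ((⌊(L - a * m) / b⌋₊ : ℝ) + 1))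
      ≤ ∑ m ∈ Finset.range (M + 1), ((L - a * m) / b + 1) := by
    refine Finset.sum_le_sum fun m hm => ?_
    have hmM : (m : ℝ) ≤ M := by
      exact_mod_cast Nat.lt_succ_iff.1 (Finset.mem_range.1 hm)
    have harg : (0:ℝ) ≤ (L - a * m) / b :=
      div_nonneg (by nlinarith) hb.le
    linarith [Nat.floor_le harg]
  refine le_trans step1 ?_
  rw [Finset.sum_add_distrib, Finset.sum_const, Finset.card_range, sum_linear M L hb]
  simp only [nsmul_eq_mul, Nat.cast_add, Nat.cast_one, mul_one]
  have hQ : (0:ℝ) < 2 * a * b := by positivity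
  rw [← sub_nonneg]
  have expand : (L + a + b) ^ 2 / (2 * a * b)
      - (((M + 1) * L - a * (M * (M + 1) / 2)) / b + ((M:ℝ) + 1))
    = ((L + a + b) ^ 2 - ((a * M + a) * (2 * L - a * M) + 2 * b * (a * M + a))) / (2 * a * b) := by
    field_simp
  rw [expand]
  apply div_nonneg _ hQ.le
  nlinarith [sq_nonneg (a - 2 * b - 2 * (L - a * M)), mul_nonneg ha.le hL,
    mul_nonneg ha.le hb.le, mul_nonneg ha.le ha.le, mul_nonneg hb.le hL, sq_nonneg (L - a*M)]

end NkAux2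


namespace NkAux3
open NkAux NkAux2
variable {a b : ℝ}

lemma set_empty (ha : 0 < a) (hb : 0 < b) {L : ℝ} (hL : L < 0) :
    {p : ℕ × ℕ | a * p.1 + b * p.2 ≤ L} = ∅ := by
  ext ⟨m, n⟩
  simp only [Set.mem_setOf_eq, Set.mem_empty_iff_false, iff_false, not_le]
  have : (0:ℝ) ≤ a * m + b * n := by positivity
  linarith

lemma count_lower (ha : 0 < a) (hb : 0 < b) {L : ℝ} (hL : 0 ≤ L) :
    L ^ 2 / (2 * a * b) ≤ ({p : ℕ × ℕ | a * p.1 + b * p.2 ≤ L}.ncard : ℝ) := by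
  rw [ncard_eq ha hb hL]
  push_cast
  exact sum_lower ha hb hL

lemma count_upper (ha : 0 < a) (hb : 0 < b) {L : ℝ} (hL : 0 ≤ L) :
    ({p : ℕ × ℕ | a * p.1 + b * p.2 ≤ L}.ncard : ℝ) ≤ (L + a + b) ^ 2 / (2 * a * b) := by
  rw [ncard_eq ha hb hL]
  push_cast
  exact sum_upper ha hb hL

lemma mem_S (ha : 0 < a) (hb : 0 < b) (k : ℕ) :
    Real.sqrt (2 * a * b * (k + 1)) ∈
      {L : ℝ | k + 1 ≤ {p : ℕ × ℕ | a * p.1 + b * p.2 ≤ L}.ncard} := by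
  set L₀ := Real.sqrt (2 * a * b * (k + 1)) with hL₀def
  have hL₀ : 0 ≤ L₀ := Real.sqrt_nonneg _
  have h1 := count_lower ha hb hL₀
  have h2 : L₀ ^ 2 = 2 * a * b * (k + 1) := Real.sq_sqrt (by positivity)
  have h3 : ((k:ℝ) + 1) ≤ ({p : ℕ × ℕ | a * p.1 + b * p.2 ≤ L₀}.ncard : ℝ) := by
    have : L₀ ^ 2 / (2 * a * b) = (k + 1 : ℝ) := by rw [h2]; field_simp
    linarith [h1, this.symm.le]
  exact_mod_cast h3

lemma lb_S (ha : 0 < a) (hb : 0 < b) (k : ℕ) :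
    ∀ L ∈ {L : ℝ | k + 1 ≤ {p : ℕ × ℕ | a * p.1 + b * p.2 ≤ L}.ncard},
      Real.sqrt (2 * a * b * (k + 1)) - (a + b) ≤ L := by
  intro L hLmem
  rcases lt_or_ge L 0 with hL | hL
  · exfalso
    rw [Set.mem_setOf_eq, set_empty ha hb hL, Set.ncard_empty] at hLmem
    omega
  · have h2 := count_upper ha hb hL
    have h3 : ((k:ℝ) + 1) ≤ ({p : ℕ × ℕ | a * p.1 + b * p.2 ≤ L}.ncard : ℝ) := by
      exact_mod_cast hLmem
    have h4 : 2 * a * b * (k + 1) ≤ (L + a + b) ^ 2 := by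
      have h4' := (le_div_iff₀ (by positivity : (0:ℝ) < 2 * a * b)).1 (h3.trans h2)
      nlinarith [h4']
    have h5 : Real.sqrt (2 * a * b * (k + 1)) ≤ L + a + b := by
      calc Real.sqrt (2 * a * b * (k + 1)) ≤ Real.sqrt ((L + a + b) ^ 2) :=
            Real.sqrt_le_sqrt h4
        _ = L + a + b := Real.sqrt_sq (by positivity)
    linarith

lemma Nk_le (ha : 0 < a) (hb : 0 < b) (k : ℕ) :
    Nk a b k ≤ Real.sqrt (2 * a * b * (k + 1)) :=
  csInf_le ⟨Real.sqrt (2 * a * b * (k + 1)) - (a + b), lb_S ha hb k⟩ (mem_S ha hb k)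

lemma Nk_ge (ha : 0 < a) (hb : 0 < b) (k : ℕ) :
    Real.sqrt (2 * a * b * (k + 1)) - (a + b) ≤ Nk a b k :=
  le_csInf ⟨_, mem_S ha hb k⟩ (lb_S ha hb k)


end NkAux3


/-- Asymptotics of `N_k(a,b)`: `lim_{k→∞} N_k(a,b)²/(2k) = ab`. -/
theorem Nk_sq_div_tendsto (a b : ℝ) (ha : 0 < a) (hb : 0 < b) :
    Filter.Tendsto (fun k : ℕ => (Nk a b k) ^ 2 / (2 * k)) Filter.atTop (nhds (a * b)) := by
  open NkAux3 in
  set s : ℕ → ℝ := fun k => Real.sqrt (2 * a * b * (k + 1)) with hs_def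
  have hs : ∀ k, 0 < s k := fun k => Real.sqrt_pos.2 (by positivity)
  have hs2 : ∀ k : ℕ, (s k) ^ 2 = 2 * a * b * (k + 1) :=
    fun k => Real.sq_sqrt (by positivity)
  have hsa : Tendsto s atTop atTop := by
    rw [tendsto_atTop_atTop]
    intro C
    obtain ⟨N, hN⟩ := exists_nat_ge (C ^ 2 / (2 * a * b))
    refine ⟨N, fun n hn => ?_⟩
    have hcast : (N:ℝ) ≤ n := Nat.cast_le.2 hn
    have h1 : C ^ 2 ≤ 2 * a * b * (n + 1) := by
      rw [div_le_iff₀ (by positivity : (0:ℝ) < 2 * a * b)] at hN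
      nlinarith [mul_nonneg (sub_nonneg.2 hcast) (by positivity : (0:ℝ) ≤ 2 * a * b),
        mul_pos (mul_pos (by norm_num : (0:ℝ) < 2) ha) hb]
    calc C ≤ |C| := le_abs_self C
      _ = Real.sqrt (C ^ 2) := (Real.sqrt_sq_eq_abs C).symm
      _ ≤ s n := Real.sqrt_le_sqrt h1
  have hdiv0 : Tendsto (fun k => (a + b) / s k) atTop (nhds 0) :=
    Tendsto.div_atTop tendsto_const_nhds hsa
  have t_div : Tendsto (fun k => Nk a b k / s k) atTop (nhds 1) := by
    refine tendsto_of_tendsto_of_tendsto_of_le_of_le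
      (g := fun k => 1 - (a + b) / s k) (h := fun _ => (1:ℝ)) ?_ tendsto_const_nhds ?_ ?_
    · simpa using tendsto_const_nhds.sub hdiv0
    · intro k
      show (1 : ℝ) - (a + b) / s k ≤ Nk a b k / s k
      have h1 : (1 : ℝ) - (a + b) / s k = (s k - (a + b)) / s k := by
        rw [sub_div, div_self (hs k).ne']
      rw [h1]
      exact (div_le_div_iff_of_pos_right (hs k)).2 (Nk_ge ha hb k)
    · intro k
      show Nk a b k / s k ≤ 1
      exact (div_le_one (hs k)).2 (Nk_le ha hb k)
  have t_ratio : Tendsto (fun k : ℕ => ((k:ℝ) + 1) / k) atTop (nhds 1) := by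
    have h0 : Tendsto (fun k : ℕ => 1 + 1 / (k:ℝ)) atTop (nhds 1) := by
      simpa using (tendsto_const_nhds (x := (1:ℝ))).add tendsto_one_div_atTop_nhds_zero_nat
    refine h0.congr' ?_
    filter_upwards [eventually_ge_atTop 1] with k hk
    have hk0 : (k:ℝ) ≠ 0 := by positivity
    field_simp
  have t2 : Tendsto (fun k : ℕ => a * b * (((k:ℝ) + 1) / k)) atTop (nhds (a * b)) := by
    simpa using t_ratio.const_mul (a * b)
  have tmain : Tendsto (fun k : ℕ => (Nk a b k / s k) ^ 2 * (a * b * (((k:ℝ) + 1) / k)))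
      atTop (nhds (a * b)) := by
    simpa using (t_div.pow 2).mul t2
  refine tmain.congr' ?_
  filter_upwards [eventually_ge_atTop 1] with k hk
  have hk0 : (k:ℝ) ≠ 0 := by positivity
  have hsk : s k ≠ 0 := (hs k).ne'
  have h2 := hs2 k
  rw [div_pow, h2]
  field_simp
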